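/- Let ξ* = (3 + √17)/2 and let T > 0. Suppose R, r : [0, T) → ℝ are C¹ with 0 < r(t) < R(t) for all t, satisfying R′ = −2/(R − r) and r′ = −(R − 3r)/(r(R − r)) on [0, T), and set ξ(t) = R(t)/r(t). If 1 < ξ(0) < ξ*, then ξ(t) < ξ* for all t ∈ [0, T) and ξ is strictly decreasing on [0, T). If ξ(0) > ξ*, then ξ(t) > ξ* for all t ∈ [0, T) and ξ is strictly increasing on [0, T). -/

import Mathlib

open Set

/-- Dichotomy for the sponge evolution: if the ratio `ξ = R/r` of a solution of the sponge
ODE system starts in `(1, ξ*)` it stays below `ξ*` and is strictly decreasing; if it starts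
above `ξ*` it stays above `ξ*` and is strictly increasing. -/
theorem sponge_ratio_dichotomy
    (ξs : ℝ) (hξs : ξs = (3 + Real.sqrt 17) / 2)
    (T : ℝ) (hT : 0 < T) (R r : ℝ → ℝ)
    (hC1R : ContDiffOn ℝ 1 R (Set.Ico 0 T)) (hC1r : ContDiffOn ℝ 1 r (Set.Ico 0 T))
    (hpos : ∀ t ∈ Set.Ico 0 T, 0 < r t ∧ r t < R t)
    (hR' : ∀ t ∈ Set.Ico 0 T,
      HasDerivWithinAt R (-2 / (R t - r t)) (Set.Ico 0 T) t)
    (hr' : ∀ t ∈ Set.Ico 0 T,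
      HasDerivWithinAt r (-(R t - 3 * r t) / (r t * (R t - r t))) (Set.Ico 0 T) t)
    (ξ : ℝ → ℝ) (hξ : ∀ t, ξ t = R t / r t) :
    (1 < ξ 0 → ξ 0 < ξs →
      (∀ t ∈ Set.Ico 0 T, ξ t < ξs) ∧ StrictAntiOn ξ (Set.Ico 0 T)) ∧
    (ξs < ξ 0 →
      (∀ t ∈ Set.Ico 0 T, ξs < ξ t) ∧ StrictMonoOn ξ (Set.Ico 0 T)) := by
  set s : ℝ := Real.sqrt 17 with hs_def
  have hs0 : (0:ℝ) ≤ s := Real.sqrt_nonneg 17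
  have hs2 : s ^ 2 = 17 := Real.sq_sqrt (by norm_num)
  have hs4 : (4:ℝ) < s := by nlinarith
  -- the derivative of ξ
  set D : ℝ → ℝ := fun t => (R t ^ 2 - 3 * R t * r t - 2 * r t ^ 2) / (r t ^ 3 * (R t - r t))
    with hD_def
  have hderiv : ∀ t ∈ Set.Ico 0 T, HasDerivWithinAt ξ (D t) (Set.Ico 0 T) t := by
    intro t ht
    obtain ⟨hr0, hrR⟩ := hpos t ht
    have hξfun : ξ = fun u => R u / r u := funext hξ
    rw [hξfun]
    have h := (hR' t ht).div (hr' t ht) (ne_of_gt hr0)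
    refine h.congr_deriv (Eq.symm ?_)
    have hRr : R t - r t ≠ 0 := by linarith
    have h1 : r t ≠ 0 := hr0.ne'
    have h2 : r t ^ 3 * (R t - r t) ≠ 0 := by positivity
    have h3 : r t * (R t - r t) ≠ 0 := mul_ne_zero h1 hRr
    have h4 : r t ^ 2 ≠ 0 := by positivity
    rw [hD_def]
    rw [div_eq_div_iff h2 h4]
    field_simp
    ring
  have hcont : ContinuousOn ξ (Set.Ico 0 T) := fun t ht =>
    (hderiv t ht).continuousWithinAt
  have hderivAt : ∀ t ∈ Set.Ioo 0 T, HasDerivAt ξ (D t) t := by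
    intro t ht
    exact (hderiv t ⟨ht.1.le, ht.2⟩).hasDerivAt (Ico_mem_nhds ht.1 ht.2)
  have hDneg : ∀ t ∈ Set.Ico 0 T, ξ t < ξs → D t < 0 := by
    intro t ht hlt
    obtain ⟨hr0, hrR⟩ := hpos t ht
    rw [hξ, hξs] at hlt
    have h2R : 2 * R t < (3 + s) * r t := by
      rw [div_lt_div_iff₀ hr0 (by norm_num : (0:ℝ) < 2)] at hlt
      linarith
    have hA : 2 * R t - 3 * r t - s * r t < 0 := by linarith
    have hB : 0 < 2 * R t - 3 * r t + s * r t := by nlinarith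
    have hnum : R t ^ 2 - 3 * R t * r t - 2 * r t ^ 2 < 0 := by
      nlinarith [mul_neg_of_neg_of_pos hA hB]
    exact div_neg_of_neg_of_pos hnum (mul_pos (pow_pos hr0 3) (sub_pos.mpr hrR))
  have hDpos : ∀ t ∈ Set.Ico 0 T, ξs < ξ t → 0 < D t := by
    intro t ht hlt
    obtain ⟨hr0, hrR⟩ := hpos t ht
    rw [hξ, hξs] at hlt
    have h2R : (3 + s) * r t < 2 * R t := by
      rw [div_lt_div_iff₀ (by norm_num : (0:ℝ) < 2) hr0] at hlt
      linarith
    have hA : 0 < 2 * R t - 3 * r t - s * r t := by linarith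
    have hB : 0 < 2 * R t - 3 * r t + s * r t := by nlinarith
    have hnum : 0 < R t ^ 2 - 3 * R t * r t - 2 * r t ^ 2 := by
      nlinarith [mul_pos hA hB]
    exact div_pos hnum (mul_pos (pow_pos hr0 3) (sub_pos.mpr hrR))
  have h0mem : (0:ℝ) ∈ Set.Ico 0 T := ⟨le_rfl, hT⟩
  constructor
  · intro _ h2
    have key : ∀ t ∈ Set.Ico 0 T, ξ t < ξs := by
      intro b hb
      by_contra hcon
      push_neg at hcon
      have hb0 : 0 < b := by
        rcases lt_or_eq_of_le hb.1 with h | h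
        · exact h
        · exact absurd (h ▸ hcon) (not_le.mpr h2)
      set A : Set ℝ := Set.Icc 0 b ∩ ξ ⁻¹' Set.Ici ξs with hA_def
      have hsub : Set.Icc 0 b ⊆ Set.Ico 0 T := fun x hx => ⟨hx.1, lt_of_le_of_lt hx.2 hb.2⟩
      have hAclosed : IsClosed A :=
        (hcont.mono hsub).preimage_isClosed_of_isClosed isClosed_Icc isClosed_Ici
      have hAne : A.Nonempty := ⟨b, ⟨hb.1, le_rfl⟩, hcon⟩
      have hAbdd : BddBelow A := ⟨0, fun x hx => hx.1.1⟩
      set t₀ := sInf A with ht₀_def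
      have ht₀A : t₀ ∈ A := hAclosed.csInf_mem hAne hAbdd
      have ht₀Icc : t₀ ∈ Set.Icc 0 b := ht₀A.1
      have hξt₀ : ξs ≤ ξ t₀ := ht₀A.2
      have ht₀0 : 0 < t₀ := by
        rcases lt_or_eq_of_le ht₀Icc.1 with h | h
        · exact h
        · exact absurd (h ▸ hξt₀) (not_le.mpr h2)
      have hlt : ∀ t ∈ Set.Ico 0 t₀, ξ t < ξs := by
        intro t ht
        by_contra hc
        push_neg at hc
        have : t ∈ A := ⟨⟨ht.1, le_trans ht.2.le ht₀Icc.2⟩, hc⟩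
        exact absurd (csInf_le hAbdd this) (not_le.mpr ht.2)
      have hanti : AntitoneOn ξ (Set.Icc 0 t₀) := by
        have hsub2 : Set.Icc 0 t₀ ⊆ Set.Ico 0 T :=
          fun x hx => ⟨hx.1, lt_of_le_of_lt (le_trans hx.2 ht₀Icc.2) hb.2⟩
        apply antitoneOn_of_deriv_nonpos (convex_Icc 0 t₀) (hcont.mono hsub2)
        · intro x hx
          rw [interior_Icc] at hx
          have hxIoo : x ∈ Set.Ioo 0 T := ⟨hx.1, lt_of_lt_of_le hx.2 (le_trans ht₀Icc.2 hb.2.le)⟩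
          exact ((hderivAt x hxIoo).differentiableAt).differentiableWithinAt
        · intro x hx
          rw [interior_Icc] at hx
          have hxIoo : x ∈ Set.Ioo 0 T := ⟨hx.1, lt_of_lt_of_le hx.2 (le_trans ht₀Icc.2 hb.2.le)⟩
          rw [(hderivAt x hxIoo).deriv]
          exact (hDneg x ⟨hxIoo.1.le, hxIoo.2⟩ (hlt x ⟨hx.1.le, hx.2⟩)).le
      have : ξ t₀ ≤ ξ 0 := hanti ⟨le_rfl, ht₀0.le⟩ ⟨ht₀0.le, le_rfl⟩ ht₀0.le
      linarith
    refine ⟨key, ?_⟩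
    apply strictAntiOn_of_deriv_neg (convex_Ico 0 T) hcont
    intro x hx
    rw [interior_Ico] at hx
    rw [(hderivAt x hx).deriv]
    exact hDneg x ⟨hx.1.le, hx.2⟩ (key x ⟨hx.1.le, hx.2⟩)
  · intro h2
    have key : ∀ t ∈ Set.Ico 0 T, ξs < ξ t := by
      intro b hb
      by_contra hcon
      push_neg at hcon
      have hb0 : 0 < b := by
        rcases lt_or_eq_of_le hb.1 with h | h
        · exact h
        · exact absurd (h ▸ hcon) (not_le.mpr h2)
      set A : Set ℝ := Set.Icc 0 b ∩ ξ ⁻¹' Set.Iic ξs with hA_def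
      have hsub : Set.Icc 0 b ⊆ Set.Ico 0 T := fun x hx => ⟨hx.1, lt_of_le_of_lt hx.2 hb.2⟩
      have hAclosed : IsClosed A :=
        (hcont.mono hsub).preimage_isClosed_of_isClosed isClosed_Icc isClosed_Iic
      have hAne : A.Nonempty := ⟨b, ⟨hb.1, le_rfl⟩, hcon⟩
      have hAbdd : BddBelow A := ⟨0, fun x hx => hx.1.1⟩
      set t₀ := sInf A with ht₀_def
      have ht₀A : t₀ ∈ A := hAclosed.csInf_mem hAne hAbdd
      have ht₀Icc : t₀ ∈ Set.Icc 0 b := ht₀A.1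
      have hξt₀ : ξ t₀ ≤ ξs := ht₀A.2
      have ht₀0 : 0 < t₀ := by
        rcases lt_or_eq_of_le ht₀Icc.1 with h | h
        · exact h
        · exact absurd (h ▸ hξt₀) (not_le.mpr h2)
      have hlt : ∀ t ∈ Set.Ico 0 t₀, ξs < ξ t := by
        intro t ht
        by_contra hc
        push_neg at hc
        have : t ∈ A := ⟨⟨ht.1, le_trans ht.2.le ht₀Icc.2⟩, hc⟩
        exact absurd (csInf_le hAbdd this) (not_le.mpr ht.2)
      have hmono : MonotoneOn ξ (Set.Icc 0 t₀) := by
        have hsub2 : Set.Icc 0 t₀ ⊆ Set.Ico 0 T :=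
          fun x hx => ⟨hx.1, lt_of_le_of_lt (le_trans hx.2 ht₀Icc.2) hb.2⟩
        apply monotoneOn_of_deriv_nonneg (convex_Icc 0 t₀) (hcont.mono hsub2)
        · intro x hx
          rw [interior_Icc] at hx
          have hxIoo : x ∈ Set.Ioo 0 T := ⟨hx.1, lt_of_lt_of_le hx.2 (le_trans ht₀Icc.2 hb.2.le)⟩
          exact ((hderivAt x hxIoo).differentiableAt).differentiableWithinAt
        · intro x hx
          rw [interior_Icc] at hx
          have hxIoo : x ∈ Set.Ioo 0 T := ⟨hx.1, lt_of_lt_of_le hx.2 (le_trans ht₀Icc.2 hb.2.le)⟩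
          rw [(hderivAt x hxIoo).deriv]
          exact (hDpos x ⟨hxIoo.1.le, hxIoo.2⟩ (hlt x ⟨hx.1.le, hx.2⟩)).le
      have : ξ 0 ≤ ξ t₀ := hmono ⟨le_rfl, ht₀0.le⟩ ⟨ht₀0.le, le_rfl⟩ ht₀0.le
      linarith
    refine ⟨key, ?_⟩
    apply strictMonoOn_of_deriv_pos (convex_Ico 0 T) hcont
    intro x hx
    rw [interior_Ico] at hx
    rw [(hderivAt x hx).deriv]
    exact hDpos x ⟨hx.1.le, hx.2⟩ (key x ⟨hx.1.le, hx.2⟩)
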